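/- Let L ≥ 1, let 0 = ρ_0 < ρ_1 < … < ρ_L, and let f : [0, ρ_L] → ℝ be concave and nondecreasing. For each l = 1, …, L define f_l(x) = f(ρ_{l−1} + x) − f(ρ_{l−1}) for x ∈ [0, ρ_l − ρ_{l−1}]. Then for every R ∈ [0, ρ_L], the maximum of Σ_{l=1}^L f_l(x_l) over all (x_1, …, x_L) with 0 ≤ x_l ≤ ρ_l − ρ_{l−1} for each l and Σ_{l=1}^L x_l ≤ R equals f(R) − f(0), and it is attained at x_l = min( ρ_l − ρ_{l−1}, max(R − ρ_{l−1}, 0) ). -/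

import Mathlib

lemma concave_increments {D : Set ℝ} {f : ℝ → ℝ} (hf : ConcaveOn ℝ D f)
    {a b t : ℝ} (hab : a ≤ b) (ht : 0 ≤ t)
    (ha : a ∈ D) (hbt : b + t ∈ D) :
    f (b + t) - f b ≤ f (a + t) - f a := by
  rcases eq_or_lt_of_le ht with h | h
  · simp [← h]
  have hdpos : 0 < b - a + t := by linarith
  set d := b - a + t with hd
  have hm : 0 ≤ (b - a) / d := div_nonneg (by linarith) hdpos.le
  have hl2 : 0 ≤ t / d := div_nonneg ht hdpos.le
  have hsum : (b - a) / d + t / d = 1 := by field_simp; exact hd.symm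
  have hsum2 : t / d + (b - a) / d = 1 := by linarith
  have h1 := hf.2 ha hbt hm hl2 hsum
  have h2 := hf.2 ha hbt hl2 hm hsum2
  have e1 : ((b - a) / d) • a + (t / d) • (b + t) = a + t := by
    simp only [smul_eq_mul]; field_simp; ring
  have e2 : (t / d) • a + ((b - a) / d) • (b + t) = b := by
    simp only [smul_eq_mul]; field_simp; ring
  rw [e1] at h1
  rw [e2] at h2
  simp only [smul_eq_mul] at h1 h2
  have hrw : (b - a) / d = 1 - t / d := by linarith
  have keyeq : (b - a) / d * f a + t / d * f (b + t) +
      (t / d * f a + (b - a) / d * f (b + t)) = f a + f (b + t) := by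
    rw [hrw]; ring
  linarith [add_le_add h1 h2, keyeq]

theorem segment_greedy_optimal (L : ℕ) (hL : 1 ≤ L) (ρ : ℕ → ℝ) (f : ℝ → ℝ)
    (hρ0 : ρ 0 = 0) (hρ : ∀ l, l < L → ρ l < ρ (l + 1))
    (hconc : ConcaveOn ℝ (Set.Icc (0 : ℝ) (ρ L)) f)
    (hmono : MonotoneOn f (Set.Icc (0 : ℝ) (ρ L)))
    (R : ℝ) (hR : R ∈ Set.Icc (0 : ℝ) (ρ L)) :
    (∀ x : ℕ → ℝ, (∀ l, l < L → 0 ≤ x l ∧ x l ≤ ρ (l + 1) - ρ l) →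
        (∑ l ∈ Finset.range L, x l) ≤ R →
        (∑ l ∈ Finset.range L, (f (ρ l + x l) - f (ρ l))) ≤ f R - f 0) ∧
      ((∀ l, l < L →
          0 ≤ min (ρ (l + 1) - ρ l) (max (R - ρ l) 0) ∧
            min (ρ (l + 1) - ρ l) (max (R - ρ l) 0) ≤ ρ (l + 1) - ρ l) ∧
        (∑ l ∈ Finset.range L, min (ρ (l + 1) - ρ l) (max (R - ρ l) 0)) ≤ R ∧
        (∑ l ∈ Finset.range L,
            (f (ρ l + min (ρ (l + 1) - ρ l) (max (R - ρ l) 0)) - f (ρ l)))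
          = f R - f 0) := by
  obtain ⟨hR0, hRL⟩ := hR
  have hρmono : ∀ i j : ℕ, i ≤ j → j ≤ L → ρ i ≤ ρ j := by
    intro i j hij hjL
    induction j, hij using Nat.le_induction with
    | base => exact le_refl _
    | succ n hn ih => exact le_trans (ih (by omega)) (le_of_lt (hρ n (by omega)))
  have hρmem : ∀ l, l ≤ L → ρ l ∈ Set.Icc (0 : ℝ) (ρ L) := by
    intro l hl
    exact ⟨hρ0 ▸ hρmono 0 l (Nat.zero_le _) hl, hρmono l L hl (le_refl _)⟩
  constructor
  · intro x hx hxR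
    set S : ℕ → ℝ := fun n => ∑ k ∈ Finset.range n, x k with hS
    have hSnn : ∀ l, l ≤ L → 0 ≤ S l := fun l hl =>
      Finset.sum_nonneg fun k hk =>
        (hx k (lt_of_lt_of_le (Finset.mem_range.mp hk) hl)).1
    have hS0 : S 0 = 0 := by simp [hS]
    have hSle : ∀ l, l ≤ L → S l ≤ ρ l := by
      intro l hl
      induction l with
      | zero => simp [hS0, hρ0]
      | succ n ih =>
        have h1 := (hx n (by omega)).2
        have h2 : S (n + 1) = S n + x n := Finset.sum_range_succ _ _
        have h3 := ih (by omega)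
        linarith
    have key : ∑ l ∈ Finset.range L, (f (ρ l + x l) - f (ρ l)) ≤
        ∑ l ∈ Finset.range L, (f (S (l + 1)) - f (S l)) := by
      apply Finset.sum_le_sum
      intro l hl
      have hlL := Finset.mem_range.mp hl
      have hx0 := (hx l hlL).1
      have hx1 := (hx l hlL).2
      have hSl := hSle l hlL.le
      have hSsucc : S (l + 1) = S l + x l := Finset.sum_range_succ _ _
      rw [hSsucc]
      have hmem1 : S l ∈ Set.Icc (0 : ℝ) (ρ L) :=
        ⟨hSnn l hlL.le, le_trans hSl (hρmem l hlL.le).2⟩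
      have hmem2 : ρ l + x l ∈ Set.Icc (0 : ℝ) (ρ L) := by
        constructor
        · have := (hρmem l hlL.le).1; linarith
        · have := (hρmem (l + 1) hlL).2; linarith
      exact concave_increments hconc hSl hx0 hmem1 hmem2
    rw [Finset.sum_range_sub (fun l => f (S l))] at key
    rw [hS0] at key
    have hSL : S L ∈ Set.Icc (0 : ℝ) (ρ L) := ⟨hSnn L le_rfl, le_trans (hSle L le_rfl) le_rfl⟩
    have := hmono hSL ⟨hR0, hRL⟩ hxR
    linarith
  · refine ⟨fun l hl => ⟨le_min (by linarith [hρ l hl]) (le_max_right _ _), min_le_left _ _⟩, ?_, ?_⟩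
    · have key : ∀ l ∈ Finset.range L,
          min (ρ (l + 1) - ρ l) (max (R - ρ l) 0) = min (ρ (l + 1)) R - min (ρ l) R := by
        intro l hl
        have h1 := (hρ l (Finset.mem_range.mp hl)).le
        simp only [min_def, max_def]
        split_ifs <;> linarith
      rw [Finset.sum_congr rfl key, Finset.sum_range_sub (fun l => min (ρ l) R)]
      have : min (ρ 0) R = 0 := by rw [hρ0]; exact min_eq_left hR0
      rw [this]
      have := min_le_right (ρ L) R
      linarith
    · have key : ∀ l ∈ Finset.range L,
          f (ρ l + min (ρ (l + 1) - ρ l) (max (R - ρ l) 0)) - f (ρ l)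
            = f (min (ρ (l + 1)) R) - f (min (ρ l) R) := by
        intro l hl
        have h1 := (hρ l (Finset.mem_range.mp hl)).le
        rcases le_total R (ρ l) with h | h
        · have e1 : min (ρ (l + 1)) R = R := min_eq_right (by linarith)
          have e2 : min (ρ l) R = R := min_eq_right h
          have e3 : max (R - ρ l) 0 = 0 := max_eq_right (by linarith)
          have e4 : min (ρ (l + 1) - ρ l) (0 : ℝ) = 0 := min_eq_right (by linarith)
          rw [e3, e4, e1, e2]
          simp
        · have e2 : min (ρ l) R = ρ l := min_eq_left h
          have e3 : max (R - ρ l) 0 = R - ρ l := max_eq_left (by linarith)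
          have e5 : ρ l + min (ρ (l + 1) - ρ l) (R - ρ l) = min (ρ (l + 1)) R := by
            simp only [min_def]
            split_ifs <;> linarith
          rw [e3, e5, e2]
      rw [Finset.sum_congr rfl key, Finset.sum_range_sub (fun l => f (min (ρ l) R))]
      have e6 : min (ρ 0) R = 0 := by rw [hρ0]; exact min_eq_left hR0
      have e7 : min (ρ L) R = R := min_eq_right hRL
      rw [e6, e7]
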